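/- arXiv:1809.05661 — 4 statements merged into one kernel-verified Lean document; each statement's English description precedes it below -/
import Mathlib

section
/- For reals c > 0, n > 0, integers ρ ≥ 1, l ≥ 1, the function u ↦ −((lρ−1)!/Γ((n/c + l)ρ + 1)) · Σ_{i=0}^{lρ−1} (Γ(nρ/c + 1 + i)/(i! c^{lρ−i})) · u^i (1+cu)^{−(nρ/c + 1 + i)} is an antiderivative on (0,∞) of u ↦ u^{lρ−1} (1+cu)^{−(n/c + l)ρ − 1}. -/
/-- Integration-by-parts identity (Baskakov case c > 0): an antiderivative on (0,∞)
of u ↦ u^{lρ−1} (1+cu)^{−(n/c + l)ρ − 1}. -/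
theorem stmt_3 (c n : ℝ) (hc : 0 < c) (hn : 0 < n) (ρ l : ℕ) (hρ : 1 ≤ ρ) (hl : 1 ≤ l)
    (u : ℝ) (hu : 0 < u) :
    HasDerivAt (fun v : ℝ =>
      -((Nat.factorial (l * ρ - 1) : ℝ) / Real.Gamma ((n / c + l) * ρ + 1)) *
      ∑ i ∈ Finset.range (l * ρ),
        (Real.Gamma (n * ρ / c + 1 + i) / ((Nat.factorial i : ℝ) * c ^ (l * ρ - i))) *
          v ^ i * (1 + c * v) ^ (-(n * ρ / c + 1 + (i : ℝ))))
      (u ^ (l * ρ - 1) * (1 + c * u) ^ (-((n / c + l) * (ρ : ℝ) + 1))) u := by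
  set m := l * ρ with hmdef
  have hm1 : 1 ≤ m := Nat.one_le_iff_ne_zero.mpr (by positivity)
  have hcu : (0:ℝ) < 1 + c * u := by positivity
  set A : ℝ := n * ρ / c + 1 with hA
  have hApos : (0:ℝ) < A := by
    have : (0:ℝ) < (ρ:ℝ) := by exact_mod_cast hρ
    positivity
  set g : ℕ → ℝ := fun i =>
    Real.Gamma (A + i) / ((Nat.factorial i : ℝ) * c ^ (m - i)) * i * u ^ (i - 1) *
      (1 + c * u) ^ (-(A + (i:ℝ))) with hg
  -- derivative of each summand
  have hterm : ∀ i ∈ Finset.range m,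
      HasDerivAt (fun v : ℝ =>
        (Real.Gamma (A + i) / ((Nat.factorial i : ℝ) * c ^ (m - i))) *
          v ^ i * (1 + c * v) ^ (-(A + (i:ℝ))))
        (g i - g (i + 1)) u := by
    intro i hi
    rw [Finset.mem_range] at hi
    set a : ℝ := Real.Gamma (A + i) / ((Nat.factorial i : ℝ) * c ^ (m - i)) with ha
    have h1 : HasDerivAt (fun v : ℝ => v ^ i) ((i:ℝ) * u ^ (i - 1)) u := hasDerivAt_pow i u
    have hb : HasDerivAt (fun v : ℝ => 1 + c * v) c u := by
      simpa using ((hasDerivAt_id u).const_mul c).const_add 1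
    have h2 : HasDerivAt (fun v : ℝ => (1 + c * v) ^ (-(A + (i:ℝ))))
        (c * (-(A + (i:ℝ))) * (1 + c * u) ^ (-(A + (i:ℝ)) - 1)) u :=
      hb.rpow_const (Or.inl hcu.ne')
    have h3 := ((h1.mul h2).const_mul a)
    have hDeq : a * ((i:ℝ) * u ^ (i - 1) * (1 + c * u) ^ (-(A + (i:ℝ))) +
        u ^ i * (c * (-(A + (i:ℝ))) * (1 + c * u) ^ (-(A + (i:ℝ)) - 1)))
        = g i - g (i + 1) := by
      have hfac : ((Nat.factorial (i+1) : ℕ) : ℝ) = ((i:ℝ) + 1) * (Nat.factorial i : ℝ) := by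
        push_cast [Nat.factorial_succ]; ring
      have hGamma : Real.Gamma (A + (i:ℝ) + 1) = (A + i) * Real.Gamma (A + i) :=
        Real.Gamma_add_one (by positivity)
      have hcpow : c ^ (m - i) = c ^ (m - (i + 1)) * c := by
        rw [← pow_succ]
        congr 1
        omega
      have hfacne : (Nat.factorial i : ℝ) ≠ 0 := by exact_mod_cast (Nat.factorial_pos i).ne'
      simp only [hg, ha]
      push_cast [Nat.factorial_succ, Nat.add_sub_cancel]
      rw [show -(A + ((i:ℝ) + 1)) = -(A + (i:ℝ)) - 1 from by ring,
        show A + ((i:ℝ) + 1) = A + (i:ℝ) + 1 from by ring, hGamma, hcpow]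
      field_simp
      ring
    rw [← hDeq]
    simpa [mul_assoc] using h3
  have hsum := (HasDerivAt.sum hterm).const_mul
    (-((Nat.factorial (m - 1) : ℝ) / Real.Gamma ((n / c + l) * ρ + 1)))
  have htel : ∑ i ∈ Finset.range m, (g i - g (i + 1)) = g 0 - g m :=
    Finset.sum_range_sub' g m
  have hg0 : g 0 = 0 := by simp [hg]
  have hGam : Real.Gamma ((n / c + l) * ρ + 1) = Real.Gamma (A + m) := by
    congr 1
    simp only [hA, hmdef]
    push_cast
    ring
  have hGampos : 0 < Real.Gamma (A + m) := Real.Gamma_pos_of_pos (by positivity)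
  have hfinal : -((Nat.factorial (m - 1) : ℝ) / Real.Gamma ((n / c + l) * ρ + 1)) *
      (g 0 - g m) = u ^ (m - 1) * (1 + c * u) ^ (-((n / c + l) * (ρ:ℝ) + 1)) := by
    have hmm : (m:ℝ) * (Nat.factorial (m - 1) : ℝ) = (Nat.factorial m : ℝ) := by
      exact_mod_cast Nat.mul_factorial_pred (by omega)
    have hexp2 : (-((n / c + l) * (ρ:ℝ) + 1)) = -(A + (m:ℝ)) := by
      simp only [hA, hmdef]; push_cast; field_simp; ring
    rw [hg0, hGam, hexp2, zero_sub]
    simp only [hg, Nat.sub_self, pow_zero, mul_one]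
    have hfacm : (Nat.factorial m : ℝ) ≠ 0 := by exact_mod_cast (Nat.factorial_pos m).ne'
    set X := (1 + c * u) ^ (-(A + (m:ℝ))) with hX
    field_simp
    linear_combination X * hmm
  rw [htel, hfinal] at hsum
  simpa only [Finset.sum_apply] using hsum
end

section
/- For reals c > 0, n > c, integer ρ ≥ 1, and t ≥ 0: (c^ρ / B(ρ, nρ/c + 1)) · ∫_t^∞ u^{ρ−1} (1+cu)^{−(n/c+1)ρ − 1} du = Σ_{i=0}^{ρ−1} ((Π_{l=0}^{i−1}(nρ + c + cl))/i!) · t^i (1+ct)^{−(nρ/c + 1 + i)}, where B is the Beta function. -/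
open MeasureTheory

section Aux
open Set Filter


lemma tendsto_base (c : ℝ) (hc : 0 < c) : Tendsto (fun u : ℝ => 1 + c * u) atTop atTop :=
  tendsto_atTop_add_const_left _ 1 (Tendsto.const_mul_atTop hc tendsto_id)

lemma tendsto0 (c r : ℝ) (hc : 0 < c) (hr : 0 < r) :
    Tendsto (fun u : ℝ => (1 + c * u) ^ (-r)) atTop (nhds 0) :=
  (tendsto_rpow_neg_atTop hr).comp (tendsto_base c hc)

lemma bound_aux (c s : ℝ) (hc : 0 < c) (k : ℕ) {u : ℝ} (hu : 0 ≤ u) :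
    u ^ k * (1 + c * u) ^ (-s) ≤ (1 / c ^ k) * (1 + c * u) ^ ((k : ℝ) - s) := by
  have hpos : (0:ℝ) < 1 + c * u := by positivity
  have h1 : u ^ k ≤ ((1 + c * u) / c) ^ k := by
    apply pow_le_pow_left₀ hu
    rw [le_div_iff₀ hc]
    nlinarith
  calc u ^ k * (1 + c * u) ^ (-s) ≤ ((1 + c * u) / c) ^ k * (1 + c * u) ^ (-s) := by
        apply mul_le_mul_of_nonneg_right h1 (Real.rpow_nonneg hpos.le _)
    _ = (1 / c ^ k) * (1 + c * u) ^ ((k : ℝ) - s) := by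
        rw [div_pow, sub_eq_add_neg, Real.rpow_add hpos, Real.rpow_natCast]
        ring

lemma tendsto_pow_mul (c s : ℝ) (hc : 0 < c) (k : ℕ) (hs : (k : ℝ) < s) :
    Tendsto (fun u : ℝ => u ^ k * (1 + c * u) ^ (-s)) atTop (nhds 0) := by
  have h0 : Tendsto (fun u : ℝ => (1 / c ^ k) * (1 + c * u) ^ (-(s - (k:ℝ)))) atTop (nhds 0) := by
    simpa using (tendsto0 c (s - k) hc (by linarith)).const_mul (1 / c ^ k)
  apply squeeze_zero' (g := fun u => (1 / c ^ k) * (1 + c * u) ^ (-(s - (k:ℝ))))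
  · filter_upwards [eventually_ge_atTop (0:ℝ)] with u hu
    have hpos : (0:ℝ) < 1 + c * u := by positivity
    positivity
  · filter_upwards [eventually_ge_atTop (0:ℝ)] with u hu
    have := bound_aux c s hc k hu
    rwa [show (k:ℝ) - s = -(s - k) by ring] at this
  · exact h0

lemma hasDerivAt_rpow_base (c s u : ℝ) (hu : 1 + c * u ≠ 0) :
    HasDerivAt (fun x : ℝ => (1 + c * x) ^ (-s)) (c * (-s) * (1 + c * u) ^ (-s - 1)) u := by
  have h1 : HasDerivAt (fun x : ℝ => 1 + c * x) c u := by
    simpa using ((hasDerivAt_id u).const_mul c).const_add 1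
  exact h1.rpow_const (Or.inl hu)

lemma int0 (c r t : ℝ) (hc : 0 < c) (ht : 0 ≤ t) (hr : 1 < r) :
    IntegrableOn (fun u : ℝ => (1 + c * u) ^ (-r)) (Ioi t) ∧
    ∫ u in Ioi t, (1 + c * u) ^ (-r) = (1 + c * t) ^ (-(r - 1)) / (c * (r - 1)) := by
  set g : ℝ → ℝ := fun u => -(1 + c * u) ^ (-(r - 1)) / (c * (r - 1)) with hg
  have hderiv : ∀ x ∈ Ici t, HasDerivAt g ((1 + c * x) ^ (-r)) x := by
    intro x hx
    have hxpos : (0:ℝ) < 1 + c * x := by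
      have : t ≤ x := hx
      nlinarith
    have h := ((hasDerivAt_rpow_base c (r-1) x hxpos.ne').neg).div_const (c * (r - 1))
    refine h.congr_deriv ?_
    symm
    rw [show -(r-1) - 1 = -r by ring]
    have hd : c * (r - 1) ≠ 0 := by
      have : (0:ℝ) < r - 1 := by linarith
      positivity
    rw [eq_div_iff hd]
    ring
  have hpos : ∀ x ∈ Ioi t, 0 ≤ (1 + c * x) ^ (-r) := by
    intro x hx
    have : (0:ℝ) < 1 + c * x := by have : t < x := hx; nlinarith
    positivity
  have htend : Tendsto g atTop (nhds 0) := by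
    rw [hg]
    have := ((tendsto0 c (r-1) hc (by linarith)).neg).div_const (c * (r - 1))
    simpa using this
  constructor
  · exact integrableOn_Ioi_deriv_of_nonneg' hderiv hpos htend
  · rw [integral_Ioi_of_hasDerivAt_of_nonneg' hderiv hpos htend]
    simp only [hg]
    field_simp
    ring

lemma intOn (c b t : ℝ) (hc : 0 < c) (ht : 0 ≤ t) (k : ℕ) (hb : (k : ℝ) + 1 < b) :
    IntegrableOn (fun u : ℝ => u ^ k * (1 + c * u) ^ (-b)) (Ioi t) := by
  have hbk : 1 < b - k := by linarith
  have hint : IntegrableOn (fun u : ℝ => (1 / c ^ k) * (1 + c * u) ^ (-(b - (k:ℝ)))) (Ioi t) :=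
    ((int0 c (b - k) t hc ht hbk).1).const_mul _
  apply Integrable.mono' hint
  · apply ContinuousOn.aestronglyMeasurable _ measurableSet_Ioi
    apply ContinuousOn.mul (continuousOn_pow k)
    apply ContinuousOn.rpow_const
    · exact (continuous_const.add (continuous_const.mul continuous_id)).continuousOn
    · intro x hx
      have : t < x := hx
      have : (0:ℝ) < 1 + c * x := by nlinarith
      exact Or.inl this.ne'
  · rw [ae_restrict_iff' measurableSet_Ioi]
    filter_upwards with u hu
    have htu : t < u := hu
    have hu0 : (0:ℝ) ≤ u := le_trans ht htu.le
    have hpos : (0:ℝ) < 1 + c * u := by nlinarith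
    rw [Real.norm_eq_abs, abs_of_nonneg (by positivity)]
    have := bound_aux c b hc k hu0
    rwa [show (k:ℝ) - b = -(b - k) by ring] at this

lemma recur (c s t : ℝ) (hc : 0 < c) (ht : 0 ≤ t) (k : ℕ) (hs : (k:ℝ) + 1 < s) :
    c * s * ∫ u in Ioi t, u ^ (k+1) * (1 + c*u) ^ (-(s+1)) =
    ((k:ℝ)+1) * (∫ u in Ioi t, u ^ k * (1 + c*u) ^ (-s)) + t ^ (k+1) * (1 + c*t) ^ (-s) := by
  set F' : ℝ → ℝ := fun x => ((k:ℝ)+1) * (x ^ k * (1 + c*x) ^ (-s)) +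
      (c * (-s)) * (x ^ (k+1) * (1 + c*x) ^ (-(s+1))) with hF'
  have hderiv : ∀ x ∈ Ici t, HasDerivAt (fun u : ℝ => u ^ (k+1) * (1 + c*u) ^ (-s)) (F' x) x := by
    intro x hx
    have hxt : t ≤ x := hx
    have hxpos : (0:ℝ) < 1 + c * x := by nlinarith
    have h := (hasDerivAt_pow (k+1) x).mul (hasDerivAt_rpow_base c s x hxpos.ne')
    refine h.congr_deriv ?_
    symm
    rw [hF']
    simp only [Nat.add_sub_cancel]
    push_cast
    rw [show -(s+1) = -s - 1 by ring]
    ring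
  have hi1 : IntegrableOn (fun u : ℝ => u ^ k * (1 + c*u) ^ (-s)) (Ioi t) :=
    intOn c s t hc ht k hs
  have hi2 : IntegrableOn (fun u : ℝ => u ^ (k+1) * (1 + c*u) ^ (-(s+1))) (Ioi t) :=
    intOn c (s+1) t hc ht (k+1) (by push_cast; linarith)
  have hiF' : IntegrableOn F' (Ioi t) := (hi1.const_mul _).add (hi2.const_mul _)
  have htend : Tendsto (fun u : ℝ => u ^ (k+1) * (1 + c*u) ^ (-s)) atTop (nhds 0) :=
    tendsto_pow_mul c s hc (k+1) (by push_cast; linarith)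
  have heq : ∫ x in Ioi t, F' x = 0 - t ^ (k+1) * (1 + c*t) ^ (-s) :=
    integral_Ioi_of_hasDerivAt_of_tendsto' hderiv hiF' htend
  rw [hF'] at heq
  rw [integral_add (hi1.const_mul _) (hi2.const_mul _),
    MeasureTheory.integral_const_mul, MeasureTheory.integral_const_mul] at heq
  linarith [heq]

lemma key (c a t : ℝ) (hc : 0 < c) (ha : 0 < a) (ht : 0 ≤ t) (k : ℕ) (hk : 1 ≤ k) :
    (c ^ k * (∏ l ∈ Finset.range k, (a + 1 + (l:ℝ))) / (Nat.factorial (k-1) : ℝ)) *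
      ∫ u in Ioi t, u ^ (k - 1) * (1 + c*u) ^ (-(a + 1 + (k:ℝ))) =
    ∑ i ∈ Finset.range k,
      ((c ^ i * ∏ l ∈ Finset.range i, (a + 1 + (l:ℝ))) / (Nat.factorial i : ℝ)) *
        t ^ i * (1 + c*t) ^ (-(a + 1 + (i:ℝ))) := by
  induction k, hk using Nat.le_induction with
  | base =>
      have h2 : (1:ℝ) < a + 2 := by linarith
      have hint := (int0 c (a+2) t hc ht h2).2
      have e1 : -(a + 1 + ((1:ℕ):ℝ)) = -(a+2) := by push_cast; ring
      simp only [pow_one, Finset.prod_range_one, Finset.sum_range_one, Nat.cast_zero,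
        add_zero, Nat.factorial, Nat.cast_one, pow_zero, one_mul, Nat.sub_self]
      rw [show (-(a+1+1) : ℝ) = -(a+2) by ring, hint, show a + 2 - 1 = a + 1 by ring]
      have h1 : a + 1 ≠ 0 := by positivity
      field_simp
      rw [Finset.prod_range_zero]
  | succ m hm ih =>
      obtain _ | j := m
      · exact absurd hm (by omega)
      simp only [Nat.add_sub_cancel] at ih ⊢
      set s : ℝ := a + (j:ℝ) + 2 with hsdef
      have hspos : 0 < s := by positivity
      have hrec := recur c s t hc ht j (by rw [hsdef]; linarith)
      have e1 : -(a + 1 + ((j+1+1:ℕ):ℝ)) = -(s+1) := by rw [hsdef]; push_cast; ring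
      have e2 : -(a + 1 + ((j+1:ℕ):ℝ)) = -s := by rw [hsdef]; push_cast; ring
      rw [e1]
      rw [Finset.sum_range_succ, ← ih, e2]
      set I := ∫ u in Ioi t, u ^ j * (1 + c*u) ^ (-s) with hI
      set J := ∫ u in Ioi t, u ^ (j+1) * (1 + c*u) ^ (-(s+1)) with hJ
      have hcs : c * s ≠ 0 := by positivity
      have hJval : J = (((j:ℝ)+1) * I + t ^ (j+1) * (1 + c*t) ^ (-s)) / (c * s) := by
        rw [eq_div_iff hcs]; linarith [hrec]
      rw [hJval, Finset.prod_range_succ, Nat.factorial_succ]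
      have hfac : (Nat.factorial j : ℝ) ≠ 0 := by positivity
      have hs0 : a + (j:ℝ) + 2 ≠ 0 := by positivity
      push_cast
      rw [hsdef]
      field_simp
      ring

lemma gamma_prod (a : ℝ) (ha : 0 < a) (k : ℕ) :
    Real.Gamma (a + k) = (∏ l ∈ Finset.range k, (a + (l:ℝ))) * Real.Gamma a := by
  induction k with
  | zero => simp
  | succ j ih =>
      have e : a + ((j+1:ℕ):ℝ) = (a + (j:ℝ)) + 1 := by push_cast; ring
      have hne : a + (j:ℝ) ≠ 0 := by positivity
      rw [e, Real.Gamma_add_one hne, ih, Finset.prod_range_succ]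
      ring

end Aux

section Main
open Set Filter

/-- Lemma 2 (c > 0, j = 0): the tail integral of the density μ_{n,1,ρ} equals the sum
of Baskakov basis functions p_{nρ+c,i}.  Here B(x,y) = Γ(x)Γ(y)/Γ(x+y). -/
theorem stmt_4 (c n : ℝ) (hc : 0 < c) (hn : c < n) (ρ : ℕ) (hρ : 1 ≤ ρ)
    (t : ℝ) (ht : 0 ≤ t) :
    (c ^ ρ / (Real.Gamma ρ * Real.Gamma (n * ρ / c + 1) / Real.Gamma (ρ + n * ρ / c + 1))) *
      (∫ u in Set.Ioi t, u ^ (ρ - 1) * (1 + c * u) ^ (-((n / c + 1) * (ρ : ℝ) + 1))) =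
    ∑ i ∈ Finset.range ρ,
      ((∏ l ∈ Finset.range i, (n * ρ + c + c * l)) / (Nat.factorial i : ℝ)) *
        t ^ i * (1 + c * t) ^ (-(n * ρ / c + 1 + (i : ℝ))) := by
  have hcne : c ≠ 0 := hc.ne'
  have hnpos : 0 < n := lt_trans hc hn
  have hρpos : (0:ℝ) < ρ := by exact_mod_cast Nat.pos_of_ne_zero (by omega)
  set a : ℝ := n * ρ / c with ha_def
  have ha : 0 < a := div_pos (mul_pos hnpos hρpos) hc
  have e_exp : -((n / c + 1) * (ρ : ℝ) + 1) = -(a + 1 + (ρ:ℝ)) := by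
    rw [ha_def]; field_simp; ring
  have hG : Real.Gamma ((ρ:ℝ)) = (Nat.factorial (ρ-1) : ℝ) := by
    obtain ⟨m, rfl⟩ : ∃ m, ρ = m + 1 := ⟨ρ-1, by omega⟩
    push_cast
    rw [Real.Gamma_nat_eq_factorial]
  have hG2 : Real.Gamma ((ρ:ℝ) + a + 1) =
      (∏ l ∈ Finset.range ρ, (a + 1 + (l:ℝ))) * Real.Gamma (a+1) := by
    rw [show (ρ:ℝ) + a + 1 = (a+1) + ρ by ring, gamma_prod (a+1) (by linarith) ρ]
  have hGa1 : Real.Gamma (a+1) ≠ 0 := (Real.Gamma_pos_of_pos (by linarith)).ne'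
  have hP : (0:ℝ) < ∏ l ∈ Finset.range ρ, (a + 1 + (l:ℝ)) := by
    apply Finset.prod_pos
    intro l _
    have : (0:ℝ) ≤ l := Nat.cast_nonneg l
    linarith
  have hfac : (Nat.factorial (ρ-1) : ℝ) ≠ 0 := by positivity
  have hkey := key c a t hc ha ht ρ hρ
  rw [e_exp, hG, hG2]
  rw [show c^ρ / ((Nat.factorial (ρ-1):ℝ) * Real.Gamma (a+1) /
      ((∏ l ∈ Finset.range ρ, (a + 1 + (l:ℝ))) * Real.Gamma (a+1))) =
      c^ρ * (∏ l ∈ Finset.range ρ, (a + 1 + (l:ℝ))) / (Nat.factorial (ρ-1):ℝ) from by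
    field_simp]
  rw [hkey]
  refine Finset.sum_congr rfl fun i _ => ?_
  have hprod : ∏ l ∈ Finset.range i, (n * (ρ:ℝ) + c + c * l) =
      c^i * ∏ l ∈ Finset.range i, (a + 1 + (l:ℝ)) := by
    rw [show (c^i : ℝ) = ∏ _l ∈ Finset.range i, c from by
      rw [Finset.prod_const, Finset.card_range], ← Finset.prod_mul_distrib]
    refine Finset.prod_congr rfl fun l _ => ?_
    rw [ha_def]; field_simp
  rw [hprod]

end Main
end

section
/- For integers n ≥ 1, ρ ≥ 1, j ≥ 0, the function ω_{n,j,ρ} defined (in the c = 0 case) by ω_{n,0,ρ}(t) = ∫_t^∞ μ_{n,1,ρ}(u) du and ω_{n,j,ρ}(t) = ∫_0^t (μ_{n,j,ρ}(u) − μ_{n,j+1,ρ}(u)) du for j ≥ 1, satisfies ω_{n,j,ρ}(t) ≥ 0 for all t ≥ 0. -/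
open MeasureTheory

private lemma aux_deriv (l : ℝ) (k : ℕ) (u : ℝ) :
    HasDerivAt (fun v : ℝ => l ^ (k+1) * v ^ (k+1) * Real.exp (-l * v) / (k+1).factorial)
      (l ^ (k+1) * u ^ k * Real.exp (-l * u) / k.factorial
        - l ^ (k+2) * u ^ (k+1) * Real.exp (-l * u) / (k+1).factorial) u := by
  have hexp : HasDerivAt (fun v : ℝ => Real.exp (-l * v)) (Real.exp (-l * u) * (-l)) u := by
    have h : HasDerivAt (fun v : ℝ => -l * v) (-l) u := by
      simpa using (hasDerivAt_id u).const_mul (-l)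
    simpa using h.exp
  have hpow : HasDerivAt (fun v : ℝ => l ^ (k+1) * v ^ (k+1))
      (l ^ (k+1) * ((k+1 : ℕ) * u ^ k)) u := by
    simpa using (hasDerivAt_pow (k+1) u).const_mul (l ^ (k+1))
  have := (hpow.mul hexp).div_const ((k+1).factorial : ℝ)
  refine this.congr_deriv ?_
  have h1 : ((k+1).factorial : ℝ) = (k+1) * k.factorial := by
    push_cast [Nat.factorial_succ]; ring
  have h2 : (k.factorial : ℝ) ≠ 0 := Nat.cast_ne_zero.mpr k.factorial_ne_zero
  have h3 : ((k : ℝ) + 1) ≠ 0 := by positivity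
  rw [h1]
  field_simp
  push_cast
  ring

/-- Nonnegativity of ω_{n,j,ρ} (case c = 0), where ω_{n,0,ρ} is a tail integral of
μ_{n,1,ρ} and ω_{n,j,ρ} (j ≥ 1) is ∫_0^t (μ_{n,j,ρ} − μ_{n,j+1,ρ}). -/
theorem stmt_6 (n ρ j : ℕ) (hn : 1 ≤ n) (hρ : 1 ≤ ρ) (t : ℝ) (ht : 0 ≤ t) :
    let μ : ℕ → ℝ → ℝ := fun m u =>
      ((n * ρ : ℝ) ^ (m * ρ) / Real.Gamma (↑(m * ρ))) * u ^ (m * ρ - 1) *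
        Real.exp (-(n * ρ : ℝ) * u)
    let ω : ℝ → ℝ := fun s =>
      if j = 0 then ∫ u in Set.Ioi s, μ 1 u
      else ∫ u in (0:ℝ)..s, (μ j u - μ (j + 1) u)
    0 ≤ ω t := by
  intro μ ω
  set l : ℝ := (n * ρ : ℝ) with hl
  have hlpos : 0 < l := by
    have : (0:ℝ) < (n:ℝ) := by exact_mod_cast hn
    have : (0:ℝ) < (ρ:ℝ) := by exact_mod_cast hρ
    positivity
  by_cases hj : j = 0
  · simp only [ω, hj, if_pos]
    apply setIntegral_nonneg measurableSet_Ioi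
    intro u hu
    have hu0 : 0 ≤ u := le_trans ht (le_of_lt hu)
    have hΓ : 0 < Real.Gamma (↑(1 * ρ)) := by
      apply Real.Gamma_pos_of_pos
      have : (0:ℝ) < (ρ:ℝ) := by exact_mod_cast hρ
      simpa using this
    have he : 0 < Real.exp (-(n * ρ : ℝ) * u) := Real.exp_pos _
    have hp : (0:ℝ) ≤ ((n*ρ:ℝ)) ^ (1*ρ) := by positivity
    have hup : (0:ℝ) ≤ u ^ (1*ρ - 1) := pow_nonneg hu0 _
    positivity
  · simp only [ω, if_neg hj]
    -- Poisson partial sum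
    set P : ℕ → ℝ → ℝ := fun i u => l ^ (i+1) * u ^ i * Real.exp (-l * u) / i.factorial with hP
    set S : ℝ → ℝ := fun u => ∑ i ∈ Finset.Ico (j*ρ) ((j+1)*ρ),
        l ^ i * u ^ i * Real.exp (-l * u) / i.factorial with hS
    have hj1 : 1 ≤ j := Nat.one_le_iff_ne_zero.mpr hj
    have ha1 : 1 ≤ j * ρ := Nat.one_le_iff_ne_zero.mpr (by positivity)
    have hab : j * ρ ≤ (j+1) * ρ := Nat.mul_le_mul_right _ (Nat.le_succ j)
    -- derivative of S
    have hSderiv : ∀ u : ℝ, HasDerivAt S (P (j*ρ - 1) u - P ((j+1)*ρ - 1) u) u := by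
      intro u
      have hsum : HasDerivAt S (∑ i ∈ Finset.Ico (j*ρ) ((j+1)*ρ),
          (P (i-1) u - P i u)) u := by
        apply HasDerivAt.fun_sum
        intro i hi
        have hi1 : 1 ≤ i := le_trans ha1 (Finset.mem_Ico.mp hi).1
        obtain ⟨k, rfl⟩ := Nat.exists_eq_add_of_le hi1
        simp only [P, Nat.add_sub_cancel_left, Nat.add_comm 1 k]
        have := aux_deriv l k u
        exact this
      have htel : (∑ i ∈ Finset.Ico (j*ρ) ((j+1)*ρ), (P (i-1) u - P i u))
          = P (j*ρ - 1) u - P ((j+1)*ρ - 1) u := by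
        rw [Finset.sum_Ico_eq_sum_range]
        have h1 : ∀ k, j*ρ + k - 1 = (j*ρ - 1) + k := by
          intro k; omega
        have h2 : ∀ k, j*ρ + k = (j*ρ - 1) + k + 1 := by
          intro k; omega
        have := Finset.sum_range_sub' (fun k => P ((j*ρ - 1) + k) u) ((j+1)*ρ - j*ρ)
        calc (∑ k ∈ Finset.range ((j+1)*ρ - j*ρ), (P (j*ρ + k - 1) u - P (j*ρ + k) u))
            = ∑ k ∈ Finset.range ((j+1)*ρ - j*ρ),
                (P ((j*ρ - 1) + k) u - P ((j*ρ - 1) + (k+1)) u) := by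
              apply Finset.sum_congr rfl; intro k _
              rw [h1 k, h2 k]; ring_nf
          _ = P ((j*ρ - 1) + 0) u - P ((j*ρ - 1) + ((j+1)*ρ - j*ρ)) u := by
              exact Finset.sum_range_sub' (fun k => P ((j*ρ - 1) + k) u) _
          _ = P (j*ρ - 1) u - P ((j+1)*ρ - 1) u := by
              congr 2 <;> omega
      rw [← htel]; exact hsum
    -- μ j = P (jρ - 1), μ (j+1) = P ((j+1)ρ - 1)
    have hμ : ∀ (m : ℕ), 1 ≤ m → ∀ u : ℝ, μ m u = P (m*ρ - 1) u := by
      intro m hm u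
      have hmρ : 1 ≤ m * ρ := Nat.one_le_iff_ne_zero.mpr (by positivity)
      have hcast : (↑(m*ρ) : ℝ) = ↑(m*ρ - 1) + 1 := by
        push_cast [Nat.cast_sub hmρ]; ring
      have hΓ : Real.Gamma (↑(m*ρ)) = ((m*ρ - 1).factorial : ℝ) := by
        rw [hcast, Real.Gamma_nat_eq_factorial]
      have hpow : m * ρ - 1 + 1 = m * ρ := by omega
      simp only [μ, P, hΓ, hpow]
      ring
    have heq : ∀ u : ℝ, μ j u - μ (j+1) u = P (j*ρ - 1) u - P ((j+1)*ρ - 1) u := by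
      intro u
      rw [hμ j hj1 u, hμ (j+1) (Nat.le_succ_of_le hj1) u]
    -- continuity of the derivative
    have hcont : Continuous (fun u => P (j*ρ - 1) u - P ((j+1)*ρ - 1) u) := by
      apply Continuous.sub <;>
      · simp only [P]
        fun_prop
    -- FTC
    have hFTC : (∫ u in (0:ℝ)..t, (μ j u - μ (j+1) u)) = S t - S 0 := by
      rw [intervalIntegral.integral_congr (g := fun u => P (j*ρ - 1) u - P ((j+1)*ρ - 1) u)
        (fun u _ => heq u)]
      exact intervalIntegral.integral_eq_sub_of_hasDerivAt
        (fun x _ => hSderiv x) (hcont.intervalIntegrable 0 t)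
    rw [hFTC]
    have hS0 : S 0 = 0 := by
      simp only [hS]
      apply Finset.sum_eq_zero
      intro i hi
      have hi1 : 1 ≤ i := le_trans ha1 (Finset.mem_Ico.mp hi).1
      rw [zero_pow (by omega)]
      ring
    have hSt : 0 ≤ S t := by
      apply Finset.sum_nonneg
      intro i _
      have : (0:ℝ) < i.factorial := by exact_mod_cast i.factorial_pos
      have hle : (0:ℝ) ≤ l := le_of_lt hlpos
      positivity
    rw [hS0]; linarith
end

section
/- For n > 0 real, integer ρ ≥ 1, j ≥ 0, and t ≥ 0 (case c = 0), the derivative of ω_{n,j,ρ}(t) = Σ_{i=0}^{ρ−1} p_{nρ, i+jρ}(t) satisfies: ω_{n,0,ρ}'(t) = −μ_{n,1,ρ}(t), and for j ≥ 1, ω_{n,j,ρ}'(t) = μ_{n,j,ρ}(t) − μ_{n,j+1,ρ}(t), where p_{m,i}(t) = m^i t^i e^{−mt}/i! and μ_{n,j,ρ}(t) = ((nρ)^{jρ}/Γ(jρ)) t^{jρ−1} e^{−nρt}. -/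
/-- Differentiated form of Lemma 2 (c = 0): the derivative of
ω_{n,j,ρ}(t) = Σ_{i=0}^{ρ−1} p_{nρ, i+jρ}(t) is −μ_{n,1,ρ}(t) if j = 0,
and μ_{n,j,ρ}(t) − μ_{n,j+1,ρ}(t) if j ≥ 1. -/
theorem stmt_16 (n : ℝ) (hn : 0 < n) (ρ j : ℕ) (hρ : 1 ≤ ρ) (t : ℝ) (ht : 0 ≤ t) :
    let p : ℕ → ℝ → ℝ := fun i y =>
      (n * ρ : ℝ) ^ i * y ^ i * Real.exp (-(n * ρ) * y) / (Nat.factorial i : ℝ)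
    let μ : ℕ → ℝ → ℝ := fun m y =>
      ((n * ρ : ℝ) ^ (m * ρ) / Real.Gamma (↑(m * ρ))) * y ^ (m * ρ - 1) *
        Real.exp (-(n * ρ) * y)
    let ω : ℝ → ℝ := fun y => ∑ i ∈ Finset.range ρ, p (i + j * ρ) y
    (j = 0 → HasDerivAt ω (-μ 1 t) t) ∧
    (1 ≤ j → HasDerivAt ω (μ j t - μ (j + 1) t) t) := by
  intro p μ ω
  set M : ℝ := n * ρ with hM
  set F : ℕ → ℝ := fun k =>
    if k = 0 then 0 else M ^ k * t ^ (k - 1) * Real.exp (-M * t) / (Nat.factorial (k - 1) : ℝ)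
    with hF
  -- derivative of each basis function
  have hP : ∀ k : ℕ, HasDerivAt (p k) (F k - F (k + 1)) t := by
    intro k
    have h1 : HasDerivAt (fun y : ℝ => y ^ k) ((k : ℝ) * t ^ (k - 1)) t := hasDerivAt_pow k t
    have h2 : HasDerivAt (fun y : ℝ => Real.exp (-M * y)) (Real.exp (-M * t) * (-M)) t := by
      have := ((hasDerivAt_id t).const_mul (-M)).exp
      simpa using this
    have h3 := ((h1.fun_mul h2).const_mul (M ^ k)).div_const (Nat.factorial k : ℝ)
    have hfun : (fun y : ℝ => M ^ k * (y ^ k * Real.exp (-M * y)) / (Nat.factorial k : ℝ))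
        = p k := by
      funext y
      simp only [p, ← hM, mul_assoc]
    rw [hfun] at h3
    refine h3.congr_deriv (Eq.symm ?_)
    rcases Nat.eq_zero_or_pos k with hk | hk
    · subst hk
      simp [hF, mul_comm]
    · have hk0 : k ≠ 0 := hk.ne'
      have hfac : (Nat.factorial k : ℝ) = k * (Nat.factorial (k - 1) : ℝ) := by
        rcases Nat.exists_eq_succ_of_ne_zero hk0 with ⟨l, rfl⟩
        simp only [Nat.factorial_succ, Nat.add_sub_cancel]
        push_cast; ring
      have hfacpos : (0:ℝ) < (Nat.factorial (k-1) : ℝ) := by positivity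
      simp only [hF, if_neg hk0, Nat.succ_ne_zero, if_neg (Nat.succ_ne_zero k),
        Nat.add_sub_cancel]
      rw [hfac]
      field_simp
      ring
  -- derivative of ω by summing
  have hω : HasDerivAt ω (∑ i ∈ Finset.range ρ, (F (i + j * ρ) - F (i + j * ρ + 1))) t := by
    exact HasDerivAt.fun_sum fun i _ => hP (i + j * ρ)
  have htel : (∑ i ∈ Finset.range ρ, (F (i + j * ρ) - F (i + j * ρ + 1)))
      = F (j * ρ) - F (ρ + j * ρ) := by
    have := Finset.sum_range_sub' (fun i => F (i + j * ρ)) ρ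
    simpa [add_right_comm] using this
  rw [htel] at hω
  -- Gamma values
  have hΓ : ∀ k : ℕ, 1 ≤ k → Real.Gamma (k : ℝ) = (Nat.factorial (k - 1) : ℝ) := by
    intro k hk
    rcases Nat.exists_eq_succ_of_ne_zero (by omega : k ≠ 0) with ⟨l, rfl⟩
    rw [show ((l + 1 : ℕ) : ℝ) = (l : ℝ) + 1 by push_cast; ring,
      Real.Gamma_nat_eq_factorial]
    simp
  constructor
  · intro hj
    subst hj
    convert hω using 1
    have hρ0 : ρ ≠ 0 := by omega
    simp only [μ, hF, Nat.zero_mul, Nat.add_zero, if_pos rfl, one_mul, ← hM,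
      hΓ ρ hρ, if_neg hρ0]
    ring
  · intro hj
    convert hω using 1
    have hjρ : 1 ≤ j * ρ := Nat.one_le_iff_ne_zero.mpr (by positivity)
    have hjρ' : 1 ≤ (j + 1) * ρ := Nat.one_le_iff_ne_zero.mpr (by positivity)
    have he : ρ + j * ρ = (j + 1) * ρ := by ring
    simp only [μ, hF, ← hM, if_neg (by omega : j * ρ ≠ 0), he,
      if_neg (by omega : (j+1) * ρ ≠ 0), hΓ _ hjρ, hΓ _ hjρ']
    ring
end
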